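/- Let ζ = e^{2πi/6} and T = diag(ζ⁵, ζ⁴, ζ², ζ) acting on Sym^n(C^4). Then the trace of T⁻¹ on Sym^n(C^4) equals 1 if n ≡ 0 mod 6, equals -1 if n ≡ 2 mod 6, and equals 0 otherwise. -/

import Mathlib

open Finset Complex

/-- The trace on `Sym^n(ℂ^4)` of a diagonal matrix with eigenvalues `d 0, d 1, d 2, d 3`:
the sum over all monomials of degree `n` in the basis vectors of the product of the
corresponding eigenvalues. -/
noncomputable def symTrace (d : Fin 4 → ℂ) (n : ℕ) : ℂ :=
  ∑ x ∈ Finset.Nat.antidiagonalTuple 4 n, ∏ i, d i ^ x i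

open PowerSeries

-- geometric series inverse
lemma geom_mul (a : ℂ) : ((1 : ℂ⟦X⟧) - C a * X) * PowerSeries.mk (fun m => a ^ m) = 1 := by
  ext n
  rw [sub_mul, one_mul, map_sub, mul_assoc, coeff_C_mul]
  cases n with
  | zero => simp
  | succ m => simp [coeff_succ_X_mul, coeff_one, pow_succ, mul_comm]

lemma symTrace_eq_coeff (d : Fin 4 → ℂ) (n : ℕ) :
    symTrace d n = coeff n (∏ i, PowerSeries.mk fun m => d i ^ m) := by
  rw [coeff_prod, symTrace]
  refine Finset.sum_nbij' (fun x => Finsupp.equivFunOnFinite.symm x)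
    (fun l => (l : Fin 4 → ℕ)) ?_ ?_ ?_ ?_ ?_
  · intro x hx
    simp only [Finset.Nat.mem_antidiagonalTuple] at hx
    simp [Finset.mem_finsuppAntidiag, hx]
  · intro l hl
    simp only [Finset.mem_finsuppAntidiag] at hl
    simp [Finset.Nat.mem_antidiagonalTuple, ← hl.1]
  · intro x _; exact Finsupp.equivFunOnFinite.right_inv x
  · intro l _; simp
  · intro x _
    simp [coeff_mk]

noncomputable def zet : ℂ := Complex.exp (2 * Real.pi * Complex.I / 6)

lemma zet_val : zet = (1/2 : ℂ) + (Real.sqrt 3 / 2 : ℝ) * Complex.I := by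
  have h : (2 * (Real.pi:ℂ) * Complex.I / 6) = (Real.pi/3 : ℝ) * Complex.I := by
    push_cast; ring
  rw [zet, h, Complex.exp_mul_I]
  rw [← Complex.ofReal_cos, ← Complex.ofReal_sin, Real.cos_pi_div_three, Real.sin_pi_div_three]
  push_cast; ring

lemma zet_sq : zet ^ 2 = zet - 1 := by
  have h3 : ((Real.sqrt 3 : ℝ) : ℂ) ^ 2 = 3 := by
    rw [← Complex.ofReal_pow, Real.sq_sqrt (by norm_num : (3:ℝ) ≥ 0)]; norm_num
  rw [zet_val]
  push_cast
  linear_combination (Complex.I^2/4) * h3 + (3/4) * Complex.I_sq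

lemma zet_cube : zet ^ 3 = -1 := by linear_combination (zet + 1) * zet_sq
lemma zet_six : zet ^ 6 = 1 := by linear_combination (zet^3 - 1) * zet_cube

/-- the target sequence -/
noncomputable def tgt : ℕ → ℂ := fun n => if n % 6 = 0 then 1 else if n % 6 = 2 then -1 else 0

lemma tgt_mul : ((1 : ℂ⟦X⟧) + X^2 + X^4) * PowerSeries.mk tgt = 1 := by
  ext n
  rw [add_mul, add_mul, one_mul, map_add, map_add, coeff_X_pow_mul', coeff_X_pow_mul',
    coeff_mk, coeff_one]
  match n with
  | 0 => norm_num [tgt]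
  | 1 => norm_num [tgt]
  | 2 => norm_num [tgt]
  | 3 => norm_num [tgt]
  | (m+4) =>
    have h2 : 2 ≤ m + 4 := by omega
    have h4 : 4 ≤ m + 4 := by omega
    rw [if_pos h2, if_pos h4, if_neg (by omega : ¬ m + 4 = 0)]
    simp only [show m+4-2 = m+2 from rfl, show m+4-4 = m from rfl, coeff_mk]
    have : m % 6 = 0 ∨ m % 6 = 1 ∨ m % 6 = 2 ∨ m % 6 = 3 ∨ m % 6 = 4 ∨ m % 6 = 5 := by omega
    rcases this with h | h | h | h | h | h <;>
      · simp only [tgt]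
        rw [(by omega : (m+4) % 6 = (m % 6 + 4) % 6), (by omega : (m+2) % 6 = (m % 6 + 2) % 6), h]
        norm_num

lemma prod_factors :
    (∏ i : Fin 4, ((1 : ℂ⟦X⟧) - C ((![zet, zet^2, zet^4, zet^5] : Fin 4 → ℂ) i) * X)) =
      1 + X^2 + X^4 := by
  rw [Fin.prod_univ_four]
  simp only [Matrix.cons_val_zero, Matrix.cons_val_one, Matrix.head_cons,
    Matrix.cons_val_two, Matrix.tail_cons, Matrix.cons_val_three]
  have ha : (C zet)^2 = C zet - 1 := by
    rw [← map_pow, zet_sq, map_sub, map_one]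
  set a := C zet with ha'
  have h2 : C (zet^2) = a^2 := by rw [ha', ← map_pow]
  have h4 : C (zet^4) = a^4 := by rw [ha', ← map_pow]
  have h5 : C (zet^5) = a^5 := by rw [ha', ← map_pow]
  rw [h2, h4, h5]
  linear_combination (- X^2 - X^4 - a*X - a*X^2 - a*X^4 - 2*a^2*X - a^3*X + 2*a^3*X^2
    + a^3*X^4 + 2*a^4*X^2 + a^4*X^4 + a^5*X^2 + a^6*X^2 - a^6*X^4 + a^7*X^2 - a^7*X^3
    - a^7*X^4 - 2*a^8*X^3 - a^9*X^3 + a^9*X^4 + a^10*X^4) * ha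

/-- `ζ = e^{2πi/6}`, `T = diag(ζ⁵,ζ⁴,ζ²,ζ)`: the trace of `T⁻¹` on `Sym^n(ℂ^4)`
is `1` if `n ≡ 0 mod 6`, `-1` if `n ≡ 2 mod 6`, and `0` otherwise. -/
theorem trace_inv_diag_zeta6 (n : ℕ) :
    symTrace ![((Complex.exp (2 * Real.pi * Complex.I / 6)) ^ 5)⁻¹,
               ((Complex.exp (2 * Real.pi * Complex.I / 6)) ^ 4)⁻¹,
               ((Complex.exp (2 * Real.pi * Complex.I / 6)) ^ 2)⁻¹,
               (Complex.exp (2 * Real.pi * Complex.I / 6))⁻¹] n =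
      if n % 6 = 0 then 1 else if n % 6 = 2 then -1 else 0 := by
  have hv : (![((Complex.exp (2 * Real.pi * Complex.I / 6)) ^ 5)⁻¹,
               ((Complex.exp (2 * Real.pi * Complex.I / 6)) ^ 4)⁻¹,
               ((Complex.exp (2 * Real.pi * Complex.I / 6)) ^ 2)⁻¹,
               (Complex.exp (2 * Real.pi * Complex.I / 6))⁻¹] : Fin 4 → ℂ)
      = ![zet, zet^2, zet^4, zet^5] := by
    have e5 : (zet^5)⁻¹ = zet := inv_eq_of_mul_eq_one_right (by linear_combination zet_six)
    have e4 : (zet^4)⁻¹ = zet^2 := inv_eq_of_mul_eq_one_right (by linear_combination zet_six)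
    have e2 : (zet^2)⁻¹ = zet^4 := inv_eq_of_mul_eq_one_right (by linear_combination zet_six)
    have e1 : zet⁻¹ = zet^5 := inv_eq_of_mul_eq_one_right (by linear_combination zet_six)
    show (![(zet^5)⁻¹, (zet^4)⁻¹, (zet^2)⁻¹, zet⁻¹] : Fin 4 → ℂ) = _
    rw [e5, e4, e2, e1]
  rw [hv, symTrace_eq_coeff]
  set d : Fin 4 → ℂ := ![zet, zet^2, zet^4, zet^5] with hd
  set G : ℂ⟦X⟧ := ∏ i : Fin 4, PowerSeries.mk fun m => d i ^ m with hG
  have hPG : ((1 : ℂ⟦X⟧) + X^2 + X^4) * G = 1 := by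
    rw [← prod_factors, hG, ← Finset.prod_mul_distrib]
    simp only [hd, geom_mul]
    exact Finset.prod_const_one
  have hGeq : G = PowerSeries.mk tgt := by
    calc G = (((1 : ℂ⟦X⟧) + X^2 + X^4) * PowerSeries.mk tgt) * G := by rw [tgt_mul, one_mul]
    _ = PowerSeries.mk tgt * (((1 : ℂ⟦X⟧) + X^2 + X^4) * G) := by ring
    _ = PowerSeries.mk tgt := by rw [hPG, mul_one]
  rw [hGeq, coeff_mk, tgt]
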